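/- Let X ⊂ ℝ² be finite, α > 1, and let s_2* minimise P_2(s,X) = Σ‖s-x‖² + max‖s-x‖². If s_2* is equidistant from all points of X, then s_2* also minimises P_α(s,X) = Σ‖s-x‖^α + max‖s-x‖^α; that is, s_α* = s_2*. -/

import Mathlib

/-- If the quadratic min-power centre `s₂*` is equidistant from all points of `X`, then it
also minimises the α-min-power objective for every α > 1. -/
theorem quadratic_centre_equidistant_implies_alpha_centre
    {n : ℕ} [NeZero n] (x : Fin n → EuclideanSpace ℝ (Fin 2)) (α : ℝ) (hα : 1 < α)
    (P₂ Pα : EuclideanSpace ℝ (Fin 2) → ℝ)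
    (hP₂ : ∀ s, P₂ s = (∑ i, ‖s - x i‖ ^ 2) +
      Finset.univ.sup' Finset.univ_nonempty (fun i => ‖s - x i‖ ^ 2))
    (hPα : ∀ s, Pα s = (∑ i, ‖s - x i‖ ^ α) +
      Finset.univ.sup' Finset.univ_nonempty (fun i => ‖s - x i‖ ^ α))
    (s₂ : EuclideanSpace ℝ (Fin 2)) (hs₂ : ∀ t, P₂ s₂ ≤ P₂ t)
    (heq : ∀ i j, ‖s₂ - x i‖ = ‖s₂ - x j‖) :
    ∀ t, Pα s₂ ≤ Pα t := by
  intro t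
  rw [hPα, hPα]
  set r : ℝ := ‖s₂ - x 0‖ with hrdef
  have hrall : ∀ i, ‖s₂ - x i‖ = r := fun i => heq i 0
  have hr0 : 0 ≤ r := norm_nonneg _
  rcases eq_or_lt_of_le hr0 with hr | hrpos
  · -- degenerate case : all points coincide with s₂
    have hαne : α ≠ 0 := by positivity
    have hLHS : ∀ i, ‖s₂ - x i‖ ^ α = 0 := by
      intro i; rw [hrall i, ← hr, Real.zero_rpow hαne]
    have h1 : (∑ i, ‖s₂ - x i‖ ^ α) = 0 := by
      simp [hLHS]
    have h2 : Finset.univ.sup' Finset.univ_nonempty (fun i => ‖s₂ - x i‖ ^ α) = 0 := by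
      simp only [hLHS]; exact Finset.sup'_const _ _
    rw [h1, h2]
    have h3 : (0:ℝ) ≤ ∑ i, ‖t - x i‖ ^ α :=
      Finset.sum_nonneg fun i _ => Real.rpow_nonneg (norm_nonneg _) _
    have h4 : (0:ℝ) ≤ Finset.univ.sup' Finset.univ_nonempty (fun i => ‖t - x i‖ ^ α) :=
      le_trans (Real.rpow_nonneg (norm_nonneg (t - x 0)) α)
        (Finset.le_sup' (fun i => ‖t - x i‖ ^ α) (Finset.mem_univ (0 : Fin n)))
    linarith
  -- main case r > 0
  set u : EuclideanSpace ℝ (Fin 2) := t - s₂ with hudef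
  set v : EuclideanSpace ℝ (Fin 2) := ∑ i, (s₂ - x i) with hvdef
  set S : ℝ := Finset.univ.sup' Finset.univ_nonempty
      (fun i => (inner ℝ (s₂ - x i) u : ℝ)) with hSdef
  -- Step 1: first-order optimality
  have keyA : 0 ≤ (inner ℝ v u : ℝ) + S := by
    have hstep : ∀ ε : ℝ, 0 < ε →
        0 ≤ 2 * ε * ((inner ℝ v u : ℝ) + S) + (n + 1) * ε ^ 2 * ‖u‖ ^ 2 := by
      intro ε hε
      have h := hs₂ (s₂ + ε • u)
      rw [hP₂, hP₂] at h
      have hexp : ∀ i, ‖(s₂ + ε • u) - x i‖ ^ 2 =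
          r ^ 2 + 2 * ε * (inner ℝ (s₂ - x i) u : ℝ) + ε ^ 2 * ‖u‖ ^ 2 := by
        intro i
        have : (s₂ + ε • u) - x i = (s₂ - x i) + ε • u := by abel
        rw [this, norm_add_sq_real, hrall i, real_inner_smul_right, norm_smul]
        simp [abs_of_pos hε, mul_pow]
        ring
      have hsum2 : (∑ i, ‖(s₂ + ε • u) - x i‖ ^ 2) =
          n * r ^ 2 + 2 * ε * (inner ℝ v u : ℝ) + n * (ε ^ 2 * ‖u‖ ^ 2) := by
        simp only [hexp]
        rw [Finset.sum_add_distrib, Finset.sum_add_distrib, Finset.sum_const,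
          Finset.sum_const, Finset.card_univ, Fintype.card_fin]
        have : (∑ i, 2 * ε * (inner ℝ (s₂ - x i) u : ℝ)) = 2 * ε * (inner ℝ v u : ℝ) := by
          rw [hvdef, sum_inner, Finset.mul_sum]
        rw [this]
        simp [nsmul_eq_mul]
      have hsup2 : Finset.univ.sup' Finset.univ_nonempty
          (fun i => ‖(s₂ + ε • u) - x i‖ ^ 2) =
          r ^ 2 + ε ^ 2 * ‖u‖ ^ 2 + 2 * ε * S := by
        have hmono : Monotone fun y : ℝ => r ^ 2 + ε ^ 2 * ‖u‖ ^ 2 + 2 * ε * y := by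
          intro a b hab
          have : 2 * ε * a ≤ 2 * ε * b :=
            mul_le_mul_of_nonneg_left hab (by positivity)
          dsimp only; linarith
        have hfun : (fun i : Fin n => ‖(s₂ + ε • u) - x i‖ ^ 2) =
            (fun y : ℝ => r ^ 2 + ε ^ 2 * ‖u‖ ^ 2 + 2 * ε * y) ∘
              (fun i => (inner ℝ (s₂ - x i) u : ℝ)) := by
          funext i
          simp only [Function.comp]
          rw [hexp i]; ring
        rw [hfun, ← Finset.comp_sup'_eq_sup'_comp (γ := ℝ) Finset.univ_nonempty
          (fun y : ℝ => r ^ 2 + ε ^ 2 * ‖u‖ ^ 2 + 2 * ε * y)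
          (fun a b => hmono.map_max), ← hSdef]
      have hsupL : Finset.univ.sup' Finset.univ_nonempty
          (fun i => ‖s₂ - x i‖ ^ 2) = r ^ 2 := by
        simp only [hrall]; exact Finset.sup'_const _ _
      have hsumL : (∑ i : Fin n, ‖s₂ - x i‖ ^ 2) = n * r ^ 2 := by
        simp [hrall, Finset.sum_const, Finset.card_univ, nsmul_eq_mul]
      rw [hsumL, hsupL, hsum2, hsup2] at h
      nlinarith [h]
    by_contra hneg
    push_neg at hneg
    set A : ℝ := (inner ℝ v u : ℝ) + S
    set C : ℝ := (n + 1) * ‖u‖ ^ 2 with hCdef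
    have hC : 0 ≤ C := by positivity
    have hεpos : 0 < -A / (C + 1) := by
      apply div_pos (by linarith) (by linarith)
    have h := hstep _ hεpos
    set ε : ℝ := -A / (C + 1)
    have hεeq : ε * (C + 1) = -A := by
      have hne : C + 1 ≠ 0 := by linarith
      exact div_mul_cancel₀ (-A) hne
    nlinarith [mul_pos hεpos hεpos, mul_nonneg hC (mul_pos hεpos hεpos).le]
  -- Step 2: the linear (α = 1) bound
  have hCS : ∀ i, (inner ℝ (s₂ - x i) u : ℝ) + r ^ 2 ≤ ‖t - x i‖ * r := by
    intro i
    have h1 : (inner ℝ (t - x i) (s₂ - x i) : ℝ) ≤ ‖t - x i‖ * ‖s₂ - x i‖ :=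
      real_inner_le_norm _ _
    have h2 : t - x i = u + (s₂ - x i) := by rw [hudef]; abel
    rw [h2, inner_add_left, real_inner_self_eq_norm_sq, hrall i] at h1
    rw [real_inner_comm] at h1
    rw [h2]
    linarith
  set d : Fin n → ℝ := fun i => ‖t - x i‖ with hddef
  set M : ℝ := Finset.univ.sup' Finset.univ_nonempty d with hMdef
  have hsumCS : (inner ℝ v u : ℝ) + n * r ^ 2 ≤ (∑ i, d i) * r := by
    have : (∑ i, ((inner ℝ (s₂ - x i) u : ℝ) + r ^ 2)) ≤ ∑ i, ‖t - x i‖ * r :=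
      Finset.sum_le_sum (fun i _ => hCS i)
    rw [Finset.sum_add_distrib, Finset.sum_const, Finset.card_univ, Fintype.card_fin,
      ← Finset.sum_mul] at this
    have hv : (∑ i, (inner ℝ (s₂ - x i) u : ℝ)) = (inner ℝ v u : ℝ) := by
      rw [hvdef, sum_inner]
    rw [hv] at this
    simpa [nsmul_eq_mul] using this
  have hsupCS : S + r ^ 2 ≤ M * r := by
    have : ∀ i ∈ Finset.univ, (inner ℝ (s₂ - x i) u : ℝ) ≤ M * r - r ^ 2 := by
      intro i _
      have h1 := hCS i
      have h2 : d i ≤ M := Finset.le_sup' d (Finset.mem_univ i)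
      have h3 : d i * r ≤ M * r := mul_le_mul_of_nonneg_right h2 hr0
      have : ‖t - x i‖ = d i := rfl
      rw [this] at h1
      linarith
    have := Finset.sup'_le Finset.univ_nonempty (fun i => (inner ℝ (s₂ - x i) u : ℝ)) this
    rw [← hSdef] at this
    linarith
  have hL1 : (n + 1) * r ≤ (∑ i, d i) + M := by
    have hmul : ((n + 1) * r) * r ≤ ((∑ i, d i) + M) * r := by
      have : (n + 1) * r * r = (inner ℝ v u : ℝ) + n * r ^ 2 + (S + r ^ 2)
          - ((inner ℝ v u : ℝ) + S) := by ring
      rw [this, add_mul]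
      have := keyA
      nlinarith [hsumCS, hsupCS]
    exact le_of_mul_le_mul_right hmul hrpos
  -- Step 3: tangent line trick (Bernoulli)
  set B : ℝ := r ^ (α - 1) with hBdef
  have hBpos : 0 < B := Real.rpow_pos_of_pos hrpos _
  have hrα : r ^ α = B * r := by
    have h := Real.rpow_add hrpos (α - 1) 1
    rw [Real.rpow_one] at h
    rw [hBdef, ← h]
    norm_num
  have tangent : ∀ y : ℝ, 0 ≤ y → r ^ α + α * B * (y - r) ≤ y ^ α := by
    intro y hy
    have hs : (-1 : ℝ) ≤ y / r - 1 := by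
      have : 0 ≤ y / r := div_nonneg hy hr0
      linarith
    have hb := one_add_mul_self_le_rpow_one_add hs hα.le
    rw [show (1 : ℝ) + (y / r - 1) = y / r by ring, Real.div_rpow hy hr0] at hb
    have hbα : 0 < r ^ α := Real.rpow_pos_of_pos hrpos _
    have hb2 := mul_le_mul_of_nonneg_left hb hbα.le
    have hright : r ^ α * (y ^ α / r ^ α) = y ^ α := by
      field_simp
    rw [hright] at hb2
    have hleft : r ^ α * (1 + α * (y / r - 1)) = r ^ α + α * B * (y - r) := by
      rw [hrα]
      field_simp
    rw [hleft] at hb2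
    exact hb2
  -- Assemble
  have hsupL : Finset.univ.sup' Finset.univ_nonempty (fun i => ‖s₂ - x i‖ ^ α) = r ^ α := by
    simp only [hrall]; exact Finset.sup'_const _ _
  have hsumL : (∑ i : Fin n, ‖s₂ - x i‖ ^ α) = n * r ^ α := by
    simp [hrall, Finset.sum_const, Finset.card_univ, nsmul_eq_mul]
  rw [hsumL, hsupL]
  -- lower bound for the sum
  have hsumR : n * r ^ α + α * B * ((∑ i, d i) - n * r) ≤ ∑ i, ‖t - x i‖ ^ α := by
    have h := Finset.sum_le_sum (fun i (_ : i ∈ Finset.univ) => tangent (d i) (norm_nonneg _))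
    rw [Finset.sum_add_distrib, Finset.sum_const, Finset.card_univ, Fintype.card_fin] at h
    have : (∑ i, α * B * (d i - r)) = α * B * ((∑ i, d i) - n * r) := by
      rw [← Finset.mul_sum, Finset.sum_sub_distrib, Finset.sum_const, Finset.card_univ,
        Fintype.card_fin]
      simp [nsmul_eq_mul]
    rw [this] at h
    simpa [nsmul_eq_mul, hddef] using h
  -- lower bound for the sup
  have hsupR : r ^ α + α * B * (M - r) ≤
      Finset.univ.sup' Finset.univ_nonempty (fun i => ‖t - x i‖ ^ α) := by
    obtain ⟨j, _, hj⟩ := Finset.exists_mem_eq_sup' Finset.univ_nonempty d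
    have h1 : M = d j := by rw [hMdef, hj]
    have h2 := tangent M (le_trans (norm_nonneg (t - x 0))
      (Finset.le_sup' d (Finset.mem_univ 0)))
    have h3 : M ^ α ≤ Finset.univ.sup' Finset.univ_nonempty (fun i => ‖t - x i‖ ^ α) := by
      rw [h1]
      exact Finset.le_sup' (fun i => ‖t - x i‖ ^ α) (Finset.mem_univ j)
    linarith
  have hslack : 0 ≤ α * B * ((∑ i, d i) + M - (n + 1) * r) := by
    apply mul_nonneg (mul_nonneg (by linarith) hBpos.le)
    linarith
  linarith
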